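/- Let c₃, ℭ be real and q: ℝ → ℝ a differentiable negative-valued function. Define u(z) = −log(2√(−q(z))). Then u satisfies (u')² + e^{2u} + c₃²e^{-6u} − ℭ = 0 if and only if q satisfies (q')² = 256 c₃² q⁵ + 4ℭ q² + q. -/

import Mathlib

open Real

/-- The substitution u = −log(2√(−q)) converts the ODE for the conformal factor u
into the polynomial ODE (q')² = 256c₃²q⁵ + 4ℭq² + q. -/
theorem change_of_variables (c₃ C : ℝ) (q : ℝ → ℝ)
    (hq : Differentiable ℝ q) (hqneg : ∀ z, q z < 0)
    (u : ℝ → ℝ) (hu : ∀ z, u z = -Real.log (2 * Real.sqrt (-q z))) :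
    (∀ z, (deriv u z)^2 + exp (2 * u z) + c₃^2 * exp (-6 * u z) - C = 0) ↔
    (∀ z, (deriv q z)^2 = 256 * c₃^2 * (q z)^5 + 4 * C * (q z)^2 + q z) := by
  have hqpos : ∀ z, 0 < -q z := fun z => by linarith [hqneg z]
  have hune : ∀ z, q z ≠ 0 := fun z => ne_of_lt (hqneg z)
  -- rewrite u
  have hu' : u = fun z => -(Real.log 2 + (1/2) * Real.log (-q z)) := by
    funext z
    rw [hu z, Real.log_mul (by norm_num) (ne_of_gt (Real.sqrt_pos.2 (hqpos z))),
      Real.log_sqrt (le_of_lt (hqpos z))]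
    ring
  have hderiv : ∀ z, deriv u z = -(deriv q z) / (2 * q z) := by
    intro z
    have h1 : HasDerivAt (fun z => -q z) (-(deriv q z)) z := (hq z).hasDerivAt.neg
    have h2 : HasDerivAt (fun z => Real.log (-q z)) (-(deriv q z) / (-q z)) z :=
      h1.log (ne_of_gt (hqpos z))
    have h3 : HasDerivAt u (-((1/2) * (-(deriv q z) / (-q z)))) z := by
      rw [hu']
      exact ((h2.const_mul (1/2)).const_add (Real.log 2)).neg
    rw [h3.deriv]
    field_simp
  have hexpu : ∀ z, Real.exp (u z) = (2 * Real.sqrt (-q z))⁻¹ := by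
    intro z
    rw [hu z, Real.exp_neg, Real.exp_log (mul_pos two_pos (Real.sqrt_pos.2 (hqpos z)))]
  have hsq : ∀ z, (2 * Real.sqrt (-q z))^2 = -(4 * q z) := by
    intro z
    rw [mul_pow, Real.sq_sqrt (le_of_lt (hqpos z))]
    ring
  have hexp2 : ∀ z, Real.exp (2 * u z) = -(1 / (4 * q z)) := by
    intro z
    have : Real.exp (2 * u z) = Real.exp (u z) ^ 2 := by
      rw [two_mul, Real.exp_add, sq]
    rw [this, hexpu z, inv_pow, hsq z]
    ring
  have hexp6 : ∀ z, Real.exp (-6 * u z) = -(64 * (q z)^3) := by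
    intro z
    have h1 : Real.exp (-6 * u z) = (Real.exp (u z) ^ 6)⁻¹ := by
      rw [← Real.exp_nat_mul, ← Real.exp_neg]
      norm_num
    rw [h1, hexpu z, inv_pow, inv_inv]
    have : (2 * Real.sqrt (-q z))^6 = ((2 * Real.sqrt (-q z))^2)^3 := by ring
    rw [this, hsq z]
    ring
  constructor
  · intro h z
    have hz := h z
    rw [hderiv z, hexp2 z, hexp6 z] at hz
    field_simp [hune z] at hz
    have h4 : 4 * q z * ((deriv q z)^2 - (256 * c₃^2 * (q z)^5 + 4 * C * (q z)^2 + q z)) = 0 := by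
      linear_combination (q z) * hz
    rcases mul_eq_zero.1 h4 with h5 | h5
    · exact absurd h5 (by simpa using hune z)
    · linarith
  · intro h z
    have hz := h z
    rw [hderiv z, hexp2 z, hexp6 z]
    field_simp [hune z]
    linear_combination 4 * hz
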